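/- arXiv:1802.03939 — 3 statements merged into one kernel-verified Lean document; each statement's English description precedes it below -/
import Mathlib

section
/- If K is an H-hull contained in the ball B(x, ε) for some real x, then the half-plane capacity of K satisfies hcap(K) ≤ ε²/2. -/
open Filter Set

noncomputable section

/-- The open upper half-plane. -/
def UHP : Set ℂ := {z : ℂ | 0 < z.im}

lemma phi_im (ε x : ℝ) (z : ℂ) :
    (z + (ε:ℂ)^2 / (z - x)).im = z.im - ε^2 * z.im / Complex.normSq (z - x) := by
  have h1 : (ε:ℂ)^2 / (z - x) = ((ε^2 : ℝ) : ℂ) * (z - (x:ℂ))⁻¹ := by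
    push_cast; ring
  have h2 : ((z:ℂ) - (x:ℂ)).im = z.im := by simp
  rw [Complex.add_im, h1, Complex.im_ofReal_mul, Complex.inv_im, h2]
  ring

lemma norm_g (ε x : ℝ) (Ψ : ℂ → ℂ) (z : ℂ) :
    ‖Complex.exp (Complex.I * (Ψ z - (z + (ε:ℂ)^2 / (z - x))))‖
      = Real.exp ((z + (ε:ℂ)^2 / (z - x)).im - (Ψ z).im) := by
  rw [Complex.norm_exp]
  congr 1
  simp [Complex.mul_re, Complex.sub_im]

set_option maxHeartbeats 1000000 in
/-- Key comparison: `Im Ψ(iy) ≥ y - ε²y/(x²+y²)` for large `y`. -/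
lemma key_ineq (Ψ : ℂ → ℂ) (K : Set ℂ) (x ε C R₀ : ℝ) (hε : 0 < ε) (hC : 0 ≤ C)
    (hopen : IsOpen (UHP \ K)) (hsub : K ⊆ Metric.ball (x:ℂ) ε)
    (hdiff : DifferentiableOn ℂ Ψ (UHP \ K))
    (hpos : ∀ z ∈ UHP \ K, 0 < (Ψ z).im)
    (hbound : ∀ z : ℂ, R₀ ≤ ‖z‖ → z ∈ UHP \ K → ‖(Ψ z - z) * z‖ ≤ C)
    (y : ℝ) (hy : 2*ε + 1 ≤ y) :
    y - ε^2 * y / (x^2 + y^2) ≤ (Ψ ((y:ℂ) * Complex.I)).im := by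
  have hy0 : 0 < y := by nlinarith
  -- the open region where everything is defined
  set W : Set ℂ := {z : ℂ | 0 < z.im} ∩ {z : ℂ | ε < ‖z - x‖} with hWdef
  have hWsub : W ⊆ UHP \ K := by
    rintro z ⟨h1, h2⟩
    refine ⟨h1, fun hzK => ?_⟩
    have h3 := hsub hzK
    rw [Metric.mem_ball, Complex.dist_eq] at h3
    exact absurd h3 (not_lt.2 (le_of_lt h2))
  have hgd : ∀ z ∈ W, DifferentiableAt ℂ
      (fun w => Complex.exp (Complex.I * (Ψ w - (w + (ε:ℂ)^2 / (w - x))))) z := by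
    intro z hz
    have hz0 : z - (x:ℂ) ≠ 0 := by
      intro h0
      have h2 := hz.2
      rw [mem_setOf_eq, h0] at h2
      rw [norm_zero] at h2
      linarith
    have hΨ : DifferentiableAt ℂ Ψ z :=
      hdiff.differentiableAt (hopen.mem_nhds (hWsub hz))
    have hφ : DifferentiableAt ℂ (fun w => w + (ε:ℂ)^2 / (w - x)) z :=
      differentiableAt_id.add
        ((differentiableAt_const _).div
          (differentiableAt_id.sub (differentiableAt_const _)) hz0)
    exact ((differentiableAt_const _).mul (hΨ.sub hφ)).cexp
  refine le_of_forall_pos_le_add fun c hc => ?_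
  set η := min ε (min (y/2) (c/6)) with hηdef
  have hη0 : 0 < η := lt_min hε (lt_min (by linarith) (by linarith))
  have hηε : η ≤ ε := min_le_left _ _
  have hηy : η ≤ y/2 := (min_le_right _ _).trans (min_le_left _ _)
  have hηc : η ≤ c/6 := (min_le_right _ _).trans (min_le_right _ _)
  set D := 4*(ε^2 + C)/c with hDdef
  have hD0 : 0 < D := by positivity
  have hDc : D * c = 4*(ε^2 + C) := by
    rw [hDdef, div_mul_cancel₀ _ (ne_of_gt hc)]
  set R := max (y+1) (max R₀ (|x| + 1 + D)) with hRdef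
  have hRy : y + 1 ≤ R := le_max_left _ _
  have hR0 : R₀ ≤ R := le_trans (le_max_left _ _) (le_max_right _ _)
  have hRx : |x| + 1 + D ≤ R := le_trans (le_max_right _ _) (le_max_right _ _)
  have hRpos : 0 < R := by linarith
  set U : Set ℂ := {z : ℂ | η < z.im ∧ ε + η < ‖z - x‖ ∧ ‖z‖ < R}
    with hUdef
  have habscont : Continuous (fun z : ℂ => ‖z - (x:ℂ)‖) :=
    continuous_norm.comp (continuous_id.sub continuous_const)
  have hUopen : IsOpen U := by
    have : U = {z : ℂ | η < z.im} ∩ ({z : ℂ | ε + η < ‖z - x‖} ∩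
        {z : ℂ | ‖z‖ < R}) := rfl
    rw [this]
    exact (isOpen_lt continuous_const Complex.continuous_im).inter
      ((isOpen_lt continuous_const habscont).inter
        (isOpen_lt continuous_norm continuous_const))
  have hUb : Bornology.IsBounded U := by
    apply (Metric.isBounded_ball (x := (0:ℂ)) (r := R)).subset
    intro z hz
    rw [Metric.mem_ball, Complex.dist_eq, sub_zero]
    exact hz.2.2
  set Vcl : Set ℂ := {z : ℂ | η ≤ z.im ∧ (ε + η ≤ ‖z - x‖ ∧ ‖z‖ ≤ R)}
    with hVdef
  have hVclosed : IsClosed Vcl := by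
    have : Vcl = {z : ℂ | η ≤ z.im} ∩ ({z : ℂ | ε + η ≤ ‖z - x‖} ∩
        {z : ℂ | ‖z‖ ≤ R}) := rfl
    rw [this]
    exact (isClosed_le continuous_const Complex.continuous_im).inter
      ((isClosed_le continuous_const habscont).inter
        (isClosed_le continuous_norm continuous_const))
  have hUV : U ⊆ Vcl := fun z hz => ⟨hz.1.le, hz.2.1.le, hz.2.2.le⟩
  have hclV : closure U ⊆ Vcl := closure_minimal hUV hVclosed
  have hVW : Vcl ⊆ W := fun z hz => ⟨lt_of_lt_of_le hη0 hz.1,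
    lt_of_lt_of_le (by linarith) hz.2.1⟩
  have hgc : DiffContOnCl ℂ
      (fun w => Complex.exp (Complex.I * (Ψ w - (w + (ε:ℂ)^2 / (w - x))))) U :=
    ⟨fun z hz => (hgd z (hVW (hUV hz))).differentiableWithinAt,
      fun z hz => ((hgd z (hVW (hclV hz))).continuousAt).continuousWithinAt⟩
  have hfront : ∀ z ∈ frontier U,
      ‖Complex.exp (Complex.I * (Ψ z - (z + (ε:ℂ)^2 / (z - x))))‖ ≤ Real.exp c := by
    intro z hzf
    rw [hUopen.frontier_eq] at hzf
    obtain ⟨hzc, hznU⟩ := hzf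
    obtain ⟨h1, h2, h3⟩ := hclV hzc
    have hzW : z ∈ W := ⟨lt_of_lt_of_le hη0 h1, lt_of_lt_of_le (by linarith) h2⟩
    have hΨpos := hpos z (hWsub hzW)
    have hzim : 0 ≤ z.im := le_trans hη0.le h1
    rw [norm_g, Real.exp_le_exp, phi_im]
    have hfrac : 0 ≤ ε^2 * z.im / Complex.normSq (z - x) :=
      div_nonneg (mul_nonneg (sq_nonneg ε) hzim) (Complex.normSq_nonneg _)
    have hcases : z.im = η ∨ ‖z - x‖ = ε + η ∨ ‖z‖ = R := by
      by_contra hcon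
      push_neg at hcon
      exact hznU ⟨lt_of_le_of_ne h1 (Ne.symm hcon.1),
        lt_of_le_of_ne h2 (Ne.symm hcon.2.1), lt_of_le_of_ne h3 hcon.2.2⟩
    rcases hcases with hcase | hcase | hcase
    · -- bottom edge : Im z = η
      linarith [hcase]
    · -- circular edge : |z - x| = ε + η
      have hnsq : Complex.normSq (z - x) = (ε + η)^2 := by
        rw [← Complex.sq_norm, hcase]
      rw [hnsq]
      have himle : z.im ≤ ε + η := by
        have h4 := Complex.abs_im_le_norm (z - (x:ℂ))
        have h5 : ((z:ℂ) - (x:ℂ)).im = z.im := by simp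
        rw [h5, hcase] at h4
        exact (le_abs_self _).trans h4
      have hden : (0:ℝ) < (ε + η)^2 := by positivity
      have hrw : z.im - ε^2 * z.im / (ε + η)^2 = (z.im * ((ε+η)^2 - ε^2)) / (ε+η)^2 := by
        field_simp
      have hkey : z.im * ((ε+η)^2 - ε^2) ≤ (c/2) * (ε+η)^2 := by
        have e1 : z.im * ((ε+η)^2 - ε^2) ≤ (ε+η) * ((ε+η)^2 - ε^2) :=
          mul_le_mul_of_nonneg_right himle
            (by linarith [mul_nonneg hε.le hη0.le, sq_nonneg η])
        have ha1 : (0:ℝ) ≤ (c - 6*η) * (ε+η)^2 :=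
          mul_nonneg (by linarith) (sq_nonneg _)
        have ha2 : (0:ℝ) ≤ (ε+η) * (ε*η + 2*η^2) :=
          mul_nonneg (by linarith)
            (by linarith [mul_nonneg hε.le hη0.le, sq_nonneg η])
        nlinarith [ha1, ha2]
      have : z.im - ε^2 * z.im / (ε + η)^2 ≤ c/2 := by
        rw [hrw, div_le_iff₀ hden]
        linarith
      linarith
    · -- outer circle : |z| = R
      have hnz : R₀ ≤ ‖z‖ := by rw [hcase]; exact hR0
      have hb := hbound z hnz (hWsub hzW)
      rw [norm_mul, hcase] at hb
      have hΨz : ‖Ψ z - z‖ ≤ C / R := by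
        rw [le_div_iff₀ hRpos]
        exact hb
      have h6 : z.im - (Ψ z).im ≤ ‖Ψ z - z‖ := by
        have h7 := Complex.abs_im_le_norm (Ψ z - z)
        have h8 : (Ψ z - z).im = (Ψ z).im - z.im := by simp
        rw [h8] at h7
        have h9 := neg_abs_le ((Ψ z).im - z.im)
        linarith
      have hCR : C / R ≤ c/4 := by
        rw [div_le_iff₀ hRpos]
        nlinarith [abs_nonneg x]
      linarith
  -- apply the maximum modulus principle at z = iy
  have hns : Complex.normSq ((y:ℂ) * Complex.I - x) = x^2 + y^2 := by
    simp [Complex.normSq_apply, Complex.mul_I_re, Complex.mul_I_im]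
    ring
  have him : ((y:ℂ) * Complex.I).im = y := by simp
  have hyI : (y:ℂ) * Complex.I ∈ U := by
    refine ⟨?_, ?_, ?_⟩
    · show η < ((y:ℂ) * Complex.I).im
      rw [him]
      linarith
    · have habs : ‖(y:ℂ) * Complex.I - x‖ ^ 2 = x^2 + y^2 := by
        rw [Complex.sq_norm, hns]
      apply lt_of_pow_lt_pow_left₀ 2 (norm_nonneg _)
      rw [habs]
      nlinarith
    · have : ‖(y:ℂ) * Complex.I‖ = y := by
        rw [norm_mul, Complex.norm_I, Complex.norm_real, Real.norm_of_nonneg hy0.le, mul_one]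
      rw [this]
      linarith
  have hle : ‖Complex.exp (Complex.I * (Ψ ((y:ℂ) * Complex.I) -
      (((y:ℂ) * Complex.I) + (ε:ℂ)^2 / (((y:ℂ) * Complex.I) - x))))‖ ≤ Real.exp c :=
    Complex.norm_le_of_forall_mem_frontier_norm_le hUb hgc hfront (subset_closure hyI)
  rw [norm_g, Real.exp_le_exp, phi_im, hns, him] at hle
  linarith

/-- `K` is an `ℍ`-hull: a compact subset of the closed upper half-plane with
`K = closure (ℍ ∩ K)` and simply connected complement `ℍ \ K`. -/
def IsHHull (K : Set ℂ) : Prop :=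
  IsCompact K ∧ K ⊆ closure UHP ∧ K = closure (UHP ∩ K) ∧
    IsConnected (UHP \ K) ∧ SimplyConnectedSpace ↥(UHP \ K)

/-- `a` is the half-plane capacity of the hull `K`, witnessed by the conformal map
`Ψ : ℍ \ K → ℍ` with expansion `Ψ z = z + 2a/z + o(1/z)` at infinity. -/
def IsHalfPlaneCap (K : Set ℂ) (Ψ : ℂ → ℂ) (a : ℝ) : Prop :=
  DifferentiableOn ℂ Ψ (UHP \ K) ∧ Set.BijOn Ψ (UHP \ K) UHP ∧
  Tendsto (fun z => (Ψ z - z) * z) (Bornology.cobounded ℂ ⊓ 𝓟 (UHP \ K))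
    (nhds ((2 * a : ℝ) : ℂ))

/-- If an `ℍ`-hull `K` is contained in the ball `B(x, ε)` with `x ∈ ℝ`,
then `hcap K ≤ ε² / 2`. -/
theorem hcap_le_of_subset_ball (K : Set ℂ) (x ε : ℝ) (hε : 0 < ε)
    (hK : IsHHull K) (hsub : K ⊆ Metric.ball (x : ℂ) ε)
    (Ψ : ℂ → ℂ) (a : ℝ) (h : IsHalfPlaneCap K Ψ a) :
    a ≤ ε ^ 2 / 2 := by
  obtain ⟨hdiff, hbij, hlim⟩ := h
  have hopen : IsOpen (UHP \ K) :=
    (isOpen_lt continuous_const Complex.continuous_im).sdiff hK.1.isClosed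
  have hpos : ∀ z ∈ UHP \ K, 0 < (Ψ z).im := fun z hz => hbij.mapsTo hz
  -- extract a bound from the limit
  have hnorm : ∀ᶠ z in (Bornology.cobounded ℂ ⊓ 𝓟 (UHP \ K)),
      ‖(Ψ z - z) * z‖ ≤ 2*|a| + 1 := by
    have h1 := hlim.norm
    have h2 : ‖((2*a : ℝ) : ℂ)‖ < 2*|a| + 1 := by
      rw [Complex.norm_real]
      calc ‖2*a‖ = |2*a| := rfl
        _ ≤ 2*|a| := by rw [abs_mul]; simp
        _ < 2*|a| + 1 := by linarith
    exact h1.eventually_le_const h2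
  rw [eventually_inf_principal] at hnorm
  obtain ⟨R₀, -, hR₀⟩ := (Filter.hasBasis_cobounded_norm.eventually_iff).mp hnorm
  have hkey2 : ∀ y : ℝ, 2*ε + 1 ≤ y →
      y - ε^2 * y / (x^2 + y^2) ≤ (Ψ ((y:ℂ) * Complex.I)).im :=
    fun y hy => key_ineq Ψ K x ε (2*|a|+1) R₀ hε (by positivity) hopen hsub hdiff hpos
      (fun z h1 h2 => hR₀ h1 h2) y hy
  -- tendsto along the imaginary axis
  have htaxis : Tendsto (fun y : ℝ => (y:ℂ) * Complex.I) atTop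
      (Bornology.cobounded ℂ ⊓ 𝓟 (UHP \ K)) := by
    rw [tendsto_inf]
    constructor
    · rw [← tendsto_norm_atTop_iff_cobounded]
      have heq : ∀ᶠ y : ℝ in atTop, y = ‖(y:ℂ) * Complex.I‖ := by
        filter_upwards [eventually_ge_atTop (0:ℝ)] with y hy
        rw [norm_mul, Complex.norm_I,
          Complex.norm_real, Real.norm_of_nonneg hy, mul_one]
      exact Tendsto.congr' heq tendsto_id
    · rw [tendsto_principal]
      filter_upwards [eventually_ge_atTop (|x| + ε + 1)] with y hy
      have hx0 := abs_nonneg x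
      refine ⟨?_, fun hmem => ?_⟩
      · show 0 < ((y:ℂ) * Complex.I).im
        simp only [Complex.mul_I_im, Complex.ofReal_re]
        linarith
      · have h3 := hsub hmem
        rw [Metric.mem_ball, Complex.dist_eq] at h3
        have h4 := Complex.abs_im_le_norm ((y:ℂ) * Complex.I - x)
        have h5 : ((y:ℂ) * Complex.I - (x:ℂ)).im = y := by simp
        rw [h5] at h4
        have h6 : y ≤ ‖(y:ℂ) * Complex.I - x‖ := (le_abs_self y).trans h4
        linarith
  have hre := (Complex.continuous_re.tendsto _).comp (hlim.comp htaxis)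
  have h2a : (((2*a : ℝ) : ℂ)).re = 2*a := Complex.ofReal_re _
  rw [h2a] at hre
  have hub : ∀ᶠ y : ℝ in atTop,
      (((fun z => (Ψ z - z) * z) ∘ fun y : ℝ => (y:ℂ) * Complex.I) y).re ≤ ε^2 := by
    filter_upwards [eventually_ge_atTop (2*ε+1)] with y hy
    have hk := hkey2 y hy
    have hy0 : 0 < y := by nlinarith
    have hrecomp : ((Ψ ((y:ℂ) * Complex.I) - (y:ℂ) * Complex.I) * ((y:ℂ) * Complex.I)).re
        = y * (y - (Ψ ((y:ℂ) * Complex.I)).im) := by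
      simp [Complex.mul_re, Complex.sub_re, Complex.sub_im, Complex.mul_I_re,
        Complex.mul_I_im]
      ring
    show ((Ψ ((y:ℂ) * Complex.I) - (y:ℂ) * Complex.I) * ((y:ℂ) * Complex.I)).re ≤ ε^2
    rw [hrecomp]
    have hden : (0:ℝ) < x^2 + y^2 := by positivity
    have h1 : y - (Ψ ((y:ℂ) * Complex.I)).im ≤ ε^2 * y / (x^2 + y^2) := by linarith
    have h2 : y * (y - (Ψ ((y:ℂ) * Complex.I)).im) ≤ y * (ε^2 * y / (x^2 + y^2)) :=
      mul_le_mul_of_nonneg_left h1 hy0.le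
    have h3 : y * (ε^2 * y / (x^2 + y^2)) ≤ ε^2 := by
      rw [mul_div_assoc', div_le_iff₀ hden]
      nlinarith [sq_nonneg x]
    linarith
  have hfin : 2*a ≤ ε^2 := le_of_tendsto hre hub
  linarith
end
end

section
/- Let Ω be a bounded Jordan domain, γ : [0,T] → closure(Ω) continuous avoiding an interior point x₀, and Ω(t) the component of x₀ in Ω \ γ([0,t]). Then the closed set ℂ \ Ω(t) is locally connected. -/
open Filter Set Metric Topology

noncomputable section

/-- A bounded Jordan domain: a bounded open connected set whose boundary is a Jordan curve. -/
def IsJordanDomain (D : Set ℂ) : Prop :=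
  IsOpen D ∧ IsConnected D ∧ Bornology.IsBounded D ∧
  ∃ γ : ℝ → ℂ, ContinuousOn γ (Set.Icc 0 1) ∧ γ 0 = γ 1 ∧
    Set.InjOn γ (Set.Ico 0 1) ∧ frontier D = γ '' Set.Icc 0 1

/-- A closed set `K ⊆ ℂ` is locally connected: for every `ε > 0` there is `δ > 0` such that
any two points of `K` at distance `< δ` lie in a connected subset of `K` of diameter `≤ ε`. -/
def IsLocallyConnectedSet (K : Set ℂ) : Prop :=
  ∀ ε > (0:ℝ), ∃ δ > (0:ℝ), ∀ z ∈ K, ∀ w ∈ K, dist z w < δ →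
    ∃ K₁ : Set ℂ, K₁ ⊆ K ∧ IsConnected K₁ ∧ z ∈ K₁ ∧ w ∈ K₁ ∧ Metric.diam K₁ ≤ ε

/-- The image of a compact interval under a continuous map can be decomposed into finitely
many compact connected nonempty pieces of diameter at most `ε`. -/
lemma curve_pieces {f : ℝ → ℂ} {a b : ℝ} (hf : ContinuousOn f (Set.Icc a b))
    {ε : ℝ} (hε : 0 < ε) :
    ∃ (n : ℕ) (P : Fin n → Set ℂ),
      (∀ i, IsCompact (P i) ∧ (P i).Nonempty ∧ IsPreconnected (P i) ∧
        Metric.diam (P i) ≤ ε ∧ P i ⊆ f '' Set.Icc a b) ∧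
      f '' Set.Icc a b ⊆ ⋃ i, P i := by
  rcases le_or_gt a b with hab | hab
  swap
  · exact ⟨0, Fin.elim0, fun i => i.elim0, by
      rw [Set.Icc_eq_empty (not_le.mpr hab)]; simp⟩
  obtain ⟨δ, hδ, H⟩ := Metric.uniformContinuousOn_iff.mp
    (isCompact_Icc.uniformContinuousOn_of_continuous hf) ε hε
  set n : ℕ := ⌈(b - a) / δ⌉₊ + 1 with hn
  have hn0 : 0 < (n:ℝ) := by positivity
  set cl : ℝ := (b - a) / n with hcl
  have hcl0 : 0 ≤ cl := div_nonneg (by linarith) hn0.le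
  have hclδ : cl < δ := by
    rw [hcl, div_lt_iff₀ hn0]
    have h1 : (b - a) / δ ≤ (⌈(b - a) / δ⌉₊ : ℝ) := Nat.le_ceil _
    have h2 : ((⌈(b - a) / δ⌉₊ : ℝ)) < n := by rw [hn]; push_cast; linarith
    calc b - a = ((b - a) / δ) * δ := by field_simp
      _ < (n : ℝ) * δ := mul_lt_mul_of_pos_right (lt_of_le_of_lt h1 h2) hδ
      _ = δ * n := mul_comm _ _
  set u : ℕ → ℝ := fun k => a + k * cl with hu
  have hmono : ∀ j k : ℕ, j ≤ k → u j ≤ u k := by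
    intro j k hjk
    have := mul_le_mul_of_nonneg_right (Nat.cast_le.mpr hjk : (j:ℝ) ≤ k) hcl0
    simp only [hu]; linarith
  have hun : u n = b := by
    simp only [hu, hcl]; field_simp; ring
  have hsub : ∀ k : ℕ, k < n → Set.Icc (u k) (u (k+1)) ⊆ Set.Icc a b := by
    intro k hk
    apply Set.Icc_subset_Icc
    · simp only [hu]; nlinarith [(Nat.cast_nonneg k : (0:ℝ) ≤ k)]
    · calc u (k+1) ≤ u n := hmono _ _ hk
        _ = b := hun
  have hlen : ∀ k : ℕ, u (k+1) - u k = cl := by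
    intro k; simp only [hu]; push_cast; ring
  refine ⟨n, fun i => f '' Set.Icc (u i.1) (u (i.1 + 1)), fun i => ?_, ?_⟩
  · have hsubi := hsub i.1 i.isLt
    have hcont := hf.mono hsubi
    refine ⟨isCompact_Icc.image_of_continuousOn hcont,
      (Set.nonempty_Icc.mpr (hmono i.1 (i.1+1) (Nat.le_succ _))).image f,
      isPreconnected_Icc.image f hcont, ?_, Set.image_mono hsubi⟩
    apply Metric.diam_le_of_forall_dist_le hε.le
    rintro _ ⟨x, hx, rfl⟩ _ ⟨y, hy, rfl⟩
    refine le_of_lt (H x (hsubi hx) y (hsubi hy) ?_)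
    have := Real.dist_le_of_mem_Icc hx hy
    rw [hlen i.1] at this
    exact lt_of_le_of_lt this hclδ
  · rintro _ ⟨x, hx, rfl⟩
    rcases eq_or_lt_of_le hab with hba | hba
    · refine Set.mem_iUnion.mpr ⟨⟨0, Nat.succ_pos _⟩, ⟨x, ?_, rfl⟩⟩
      have hcl0' : cl = 0 := by rw [hcl, ← hba]; simp
      have hx' : x = a := le_antisymm (hba ▸ hx.2) hx.1
      constructor
      · simp only [hu]; rw [hx']; push_cast; linarith
      · simp only [hu]; rw [hx', hcl0']; push_cast; linarith
    · have hclpos : 0 < cl := div_pos (by linarith) hn0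
      set r : ℝ := (x - a) / cl with hr
      have hr0 : 0 ≤ r := div_nonneg (by linarith [hx.1]) hclpos.le
      set k : ℕ := min (n - 1) ⌊r⌋₊ with hk
      have hkn : k < n := lt_of_le_of_lt (min_le_left _ _) (by omega)
      refine Set.mem_iUnion.mpr ⟨⟨k, hkn⟩, ⟨x, ⟨?_, ?_⟩, rfl⟩⟩
      · have h1 : (k:ℝ) ≤ r :=
          le_trans (Nat.cast_le.mpr (min_le_right _ _)) (Nat.floor_le hr0)
        have h2 := mul_le_mul_of_nonneg_right h1 hclpos.le
        rw [hr, div_mul_cancel₀ _ (ne_of_gt hclpos)] at h2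
        simp only [hu]; linarith
      · have h2 : r ≤ (k:ℝ) + 1 := by
          rcases le_or_gt ⌊r⌋₊ (n-1) with h | h
          · have hk' : k = ⌊r⌋₊ := by omega
            rw [hk']; exact (Nat.lt_floor_add_one r).le
          · have hk' : k = n - 1 := by omega
            have hrn : r ≤ (n:ℝ) := by
              rw [hr, div_le_iff₀ hclpos, hcl]
              field_simp
              linarith [hx.2]
            rw [hk']
            have h1n : (1:ℕ) ≤ n := by omega
            have hcast : ((n - 1 : ℕ) : ℝ) + 1 = (n : ℝ) := by
              push_cast [Nat.cast_sub h1n]; ring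
            linarith [hrn, hcast]
        have h3 := mul_le_mul_of_nonneg_right h2 hclpos.le
        rw [hr, div_mul_cancel₀ _ (ne_of_gt hclpos)] at h3
        simp only [hu]; push_cast; linarith

/-- Finitely many compact sets: close points lie in intersecting members. -/
lemma pieces_link {ι : Type} [Fintype ι] (P : ι → Set ℂ) (hcpt : ∀ i, IsCompact (P i)) :
    ∃ δ > (0:ℝ), ∀ i j, ∀ p ∈ P i, ∀ q ∈ P j, dist p q < δ → (P i ∩ P j).Nonempty := by
  classical
  have key : ∀ ij : ι × ι, ∃ d : ℝ, 0 < d ∧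
      (∀ p ∈ P ij.1, ∀ q ∈ P ij.2, dist p q < d → (P ij.1 ∩ P ij.2).Nonempty) := by
    rintro ⟨i, j⟩
    by_cases hint : (P i ∩ P j).Nonempty
    · exact ⟨1, one_pos, fun _ _ _ _ _ => hint⟩
    · have hdisj : Disjoint (P i) (P j) := Set.disjoint_iff_inter_eq_empty.mpr
        (Set.not_nonempty_iff_eq_empty.mp hint)
      obtain ⟨d, hd, hdis⟩ := hdisj.exists_thickenings (hcpt i) (hcpt j).isClosed
      refine ⟨d, hd, fun p hp q hq hpq => ?_⟩
      exfalso
      have h1 : q ∈ Metric.thickening d (P i) :=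
        Metric.mem_thickening_iff.mpr ⟨p, hp, by rwa [dist_comm] at hpq⟩
      have h2 : q ∈ Metric.thickening d (P j) :=
        Metric.self_subset_thickening hd _ hq
      exact Set.disjoint_left.mp hdis h1 h2
  choose d hd hdprop using key
  rcases isEmpty_or_nonempty ι with hι | hι
  · exact ⟨1, one_pos, fun i => (hι.false i).elim⟩
  · refine ⟨Finset.univ.inf' Finset.univ_nonempty (fun ij : ι × ι => d ij), ?_, ?_⟩
    · simp only [gt_iff_lt, Finset.lt_inf'_iff]
      exact fun ij _ => hd ij
    · intro i j p hp q hq hpq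
      exact hdprop (i, j) p hp q hq
        (lt_of_lt_of_le hpq (Finset.inf'_le _ (Finset.mem_univ (i, j))))

/-- The union of two curve images is uniformly locally connected. -/
lemma curves_union_llc {f g : ℝ → ℂ} {a b a' b' : ℝ}
    (hf : ContinuousOn f (Set.Icc a b)) (hg : ContinuousOn g (Set.Icc a' b')) :
    IsLocallyConnectedSet (f '' Set.Icc a b ∪ g '' Set.Icc a' b') := by
  intro ε hε
  obtain ⟨n, P, hP, hPcov⟩ := curve_pieces hf (half_pos hε)
  obtain ⟨m, Q, hQ, hQcov⟩ := curve_pieces hg (half_pos hε)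
  set R : Fin n ⊕ Fin m → Set ℂ := Sum.elim P Q with hR
  have hcpt : ∀ i, IsCompact (R i) := by rintro (i | j); exacts [(hP i).1, (hQ j).1]
  have hRL : ∀ i, R i ⊆ f '' Set.Icc a b ∪ g '' Set.Icc a' b' := by
    rintro (i | j)
    · exact (hP i).2.2.2.2.trans Set.subset_union_left
    · exact (hQ j).2.2.2.2.trans Set.subset_union_right
  have hdiam : ∀ i, Metric.diam (R i) ≤ ε / 2 := by
    rintro (i | j); exacts [(hP i).2.2.2.1, (hQ j).2.2.2.1]
  have hconn : ∀ i, IsConnected (R i) := by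
    rintro (i | j)
    · exact ⟨(hP i).2.1, (hP i).2.2.1⟩
    · exact ⟨(hQ j).2.1, (hQ j).2.2.1⟩
  obtain ⟨δ, hδ, hlink⟩ := pieces_link R hcpt
  refine ⟨δ, hδ, ?_⟩
  intro z hz w hw hzw
  have hzR : ∃ i, z ∈ R i := by
    rcases hz with h | h
    · obtain ⟨i, hi⟩ := Set.mem_iUnion.mp (hPcov h); exact ⟨Sum.inl i, hi⟩
    · obtain ⟨j, hj⟩ := Set.mem_iUnion.mp (hQcov h); exact ⟨Sum.inr j, hj⟩
  have hwR : ∃ j, w ∈ R j := by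
    rcases hw with h | h
    · obtain ⟨i, hi⟩ := Set.mem_iUnion.mp (hPcov h); exact ⟨Sum.inl i, hi⟩
    · obtain ⟨j, hj⟩ := Set.mem_iUnion.mp (hQcov h); exact ⟨Sum.inr j, hj⟩
  obtain ⟨i, hzi⟩ := hzR
  obtain ⟨j, hwj⟩ := hwR
  have hint := hlink i j z hzi w hwj hzw
  refine ⟨R i ∪ R j, Set.union_subset (hRL i) (hRL j),
    (hconn i).union hint (hconn j), Or.inl hzi, Or.inr hwj, ?_⟩
  calc Metric.diam (R i ∪ R j) ≤ Metric.diam (R i) + Metric.diam (R j) :=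
        Metric.diam_union' hint
    _ ≤ ε := by linarith [hdiam i, hdiam j]

/-- Abstract lemma: if `K` is closed, `L ⊆ K` covers `K ∩ closure Kᶜ`, and `L` is
uniformly locally connected, then so is `K`. -/
lemma llc_of_boundary {K L : Set ℂ} (hK : IsClosed K) (hLK : L ⊆ K)
    (hbd : K ∩ closure Kᶜ ⊆ L) (hL : IsLocallyConnectedSet L) :
    IsLocallyConnectedSet K := by
  intro ε hε
  obtain ⟨δL, hδL, HL⟩ := hL (ε / 3) (by positivity)
  refine ⟨min δL (ε / 3), lt_min hδL (by positivity), ?_⟩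
  intro z hz w hw hzw
  have hzwδL : dist z w < δL := lt_of_lt_of_le hzw (min_le_left _ _)
  have hzwε : dist z w < ε / 3 := lt_of_lt_of_le hzw (min_le_right _ _)
  set c : ℝ → ℂ := fun s => z + s • (w - z) with hc
  have hccont : Continuous c := continuous_const.add (continuous_id.smul continuous_const)
  have hc0 : c 0 = z := by simp [hc]
  have hc1 : c 1 = w := by simp [hc]
  have hcdist : ∀ u v : ℝ, u ∈ Set.Icc (0:ℝ) 1 → v ∈ Set.Icc (0:ℝ) 1 →
      dist (c u) (c v) ≤ dist z w := by
    intro u v hu hv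
    have h1 : c u - c v = (u - v) • (w - z) := by
      simp only [hc, sub_smul]; ring
    rw [dist_eq_norm, h1, norm_smul]
    have habs : |u - v| ≤ 1 := by
      rw [abs_le]
      constructor <;> [linarith [hu.1, hv.2]; linarith [hu.2, hv.1]]
    calc ‖u - v‖ * ‖w - z‖ ≤ 1 * ‖w - z‖ := by
          apply mul_le_mul_of_nonneg_right _ (norm_nonneg _)
          rwa [Real.norm_eq_abs]
      _ = dist z w := by rw [one_mul, dist_eq_norm, norm_sub_rev]
  have hconnimg : ∀ a' b' : ℝ, a' ≤ b' → IsConnected (c '' Set.Icc a' b') :=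
    fun a' b' h => ⟨(Set.nonempty_Icc.mpr h).image _,
      isPreconnected_Icc.image _ hccont.continuousOn⟩
  have hdiamimg : ∀ a' b' : ℝ, Set.Icc a' b' ⊆ Set.Icc (0:ℝ) 1 →
      Metric.diam (c '' Set.Icc a' b') ≤ ε / 3 := by
    intro a' b' hsub
    apply Metric.diam_le_of_forall_dist_le (by positivity)
    rintro _ ⟨u, hu, rfl⟩ _ ⟨v, hv, rfl⟩
    exact le_trans (hcdist u v (hsub hu) (hsub hv)) hzwε.le
  -- first exit point from z side
  set Q1 : Set ℝ := {s | s ∈ Set.Icc (0:ℝ) 1 ∧ c '' Set.Icc 0 s ⊆ K} with hQ1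
  have h0Q1 : (0:ℝ) ∈ Q1 := by
    refine ⟨⟨le_refl 0, zero_le_one⟩, ?_⟩
    rintro _ ⟨u, hu, rfl⟩
    have : u = 0 := le_antisymm hu.2 hu.1
    rw [this, hc0]; exact hz
  have hQbddA : BddAbove Q1 := ⟨1, fun s hs => hs.1.2⟩
  set s1 := sSup Q1 with hs1def
  have hs1mem : s1 ∈ Set.Icc (0:ℝ) 1 :=
    ⟨le_csSup hQbddA h0Q1, csSup_le ⟨0, h0Q1⟩ (fun s hs => hs.1.2)⟩
  have hlt1 : ∀ v, 0 ≤ v → v < s1 → c v ∈ K := by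
    intro v hv0 hvs
    obtain ⟨s, hsQ, h⟩ := exists_lt_of_lt_csSup ⟨0, h0Q1⟩ hvs
    exact hsQ.2 ⟨v, ⟨hv0, h.le⟩, rfl⟩
  have hseg1 : c '' Set.Icc 0 s1 ⊆ K := by
    rintro _ ⟨u, hu, rfl⟩
    rcases lt_or_eq_of_le hu.2 with h | h
    · exact hlt1 u hu.1 h
    · rw [h]
      rcases eq_or_lt_of_le hs1mem.1 with h0 | h0
      · rw [← h0, hc0]; exact hz
      · have htd : Tendsto c (𝓝[<] s1) (𝓝 (c s1)) :=
          (hccont.tendsto s1).mono_left nhdsWithin_le_nhds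
        refine hK.mem_of_tendsto htd ?_
        filter_upwards [Ioo_mem_nhdsLT_of_mem (show s1 ∈ Set.Ioc (0:ℝ) s1 from ⟨h0, le_rfl⟩)]
          with v hv
        exact hlt1 v hv.1.le hv.2
  rcases eq_or_lt_of_le hs1mem.2 with hs11 | hs11
  · -- the whole segment lies in K
    refine ⟨c '' Set.Icc 0 1, ?_, hconnimg 0 1 zero_le_one,
      ⟨0, ⟨le_rfl, zero_le_one⟩, hc0⟩, ⟨1, ⟨zero_le_one, le_rfl⟩, hc1⟩, ?_⟩
    · rw [← hs11]; exact hseg1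
    · exact le_trans (hdiamimg 0 1 subset_rfl) (by linarith)
  · -- s1 < 1 : the segment exits K
    have hnear : ∀ r > (0:ℝ), ∃ u, s1 < u ∧ u ≤ 1 ∧ c u ∈ Kᶜ ∧ dist (c s1) (c u) < r := by
      intro r hr
      obtain ⟨η, hη, hηprop⟩ := Metric.continuous_iff.mp hccont s1 r hr
      set s := min (s1 + η / 2) ((s1 + 1) / 2) with hs
      have hss1 : s1 < s := lt_min (by linarith) (by linarith)
      have hs_le1 : s ≤ 1 := le_trans (min_le_right _ _) (by linarith)
      have hsnotQ : s ∉ Q1 := fun hmem => absurd (le_csSup hQbddA hmem) (not_le.mpr hss1)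
      have hnsub : ¬(c '' Set.Icc 0 s ⊆ K) := fun h =>
        hsnotQ ⟨⟨le_trans hs1mem.1 hss1.le, hs_le1⟩, h⟩
      rw [Set.not_subset] at hnsub
      obtain ⟨_, ⟨u, hu, rfl⟩, hcu⟩ := hnsub
      have hus1 : s1 < u := by
        by_contra hle
        exact hcu (hseg1 ⟨u, ⟨hu.1, not_lt.mp hle⟩, rfl⟩)
      refine ⟨u, hus1, le_trans hu.2 hs_le1, hcu, ?_⟩
      have hd : dist u s1 < η := by
        rw [Real.dist_eq, abs_of_pos (by linarith)]
        have h1 : u ≤ s1 + η / 2 := le_trans hu.2 (min_le_left _ _)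
        linarith
      have := hηprop u hd
      rwa [dist_comm]
    have hz'cl : c s1 ∈ closure Kᶜ := by
      rw [Metric.mem_closure_iff]
      intro r hr
      obtain ⟨u, _, _, h3, h4⟩ := hnear r hr
      exact ⟨c u, h3, h4⟩
    obtain ⟨u₀, hu₀1, hu₀2, hu₀K, _⟩ := hnear 1 one_pos
    -- the exit point from the w side
    set Q2 : Set ℝ := {s | s ∈ Set.Icc (0:ℝ) 1 ∧ c '' Set.Icc s 1 ⊆ K} with hQ2
    have h1Q2 : (1:ℝ) ∈ Q2 := by
      refine ⟨⟨zero_le_one, le_rfl⟩, ?_⟩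
      rintro _ ⟨u, hu, rfl⟩
      have : u = 1 := le_antisymm hu.2 hu.1
      rw [this, hc1]; exact hw
    have hQ2bdd : BddBelow Q2 := ⟨0, fun s hs => hs.1.1⟩
    set s2 := sInf Q2 with hs2def
    have hQ2gt : ∀ s ∈ Q2, u₀ < s := by
      intro s hs
      by_contra hle
      exact hu₀K (hs.2 ⟨u₀, ⟨not_lt.mp hle, hu₀2⟩, rfl⟩)
    have hs2mem : s2 ∈ Set.Icc (0:ℝ) 1 :=
      ⟨le_csInf ⟨1, h1Q2⟩ (fun s hs => hs.1.1), csInf_le hQ2bdd h1Q2⟩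
    have hs2pos : 0 < s2 :=
      lt_of_le_of_lt hs1mem.1 (lt_of_lt_of_le hu₀1
        (le_csInf ⟨1, h1Q2⟩ (fun s hs => (hQ2gt s hs).le)))
    have hgt2 : ∀ v, v ≤ 1 → s2 < v → c v ∈ K := by
      intro v hv1 hv2
      obtain ⟨s, hsQ, hss⟩ := exists_lt_of_csInf_lt ⟨1, h1Q2⟩ hv2
      exact hsQ.2 ⟨v, ⟨hss.le, hv1⟩, rfl⟩
    have hseg2 : c '' Set.Icc s2 1 ⊆ K := by
      rintro _ ⟨u, hu, rfl⟩
      rcases lt_or_eq_of_le hu.1 with h | h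
      · exact hgt2 u hu.2 h
      · rw [← h]
        rcases eq_or_lt_of_le hs2mem.2 with h1 | h1
        · rw [h1, hc1]; exact hw
        · have htd : Tendsto c (𝓝[>] s2) (𝓝 (c s2)) :=
            (hccont.tendsto s2).mono_left nhdsWithin_le_nhds
          refine hK.mem_of_tendsto htd ?_
          filter_upwards [Ioo_mem_nhdsGT_of_mem (show s2 ∈ Set.Ico s2 1 from ⟨le_rfl, h1⟩)]
            with v hv
          exact hgt2 v hv.2.le hv.1
    have hnear2 : ∀ r > (0:ℝ), ∃ u, u < s2 ∧ 0 ≤ u ∧ c u ∈ Kᶜ ∧ dist (c s2) (c u) < r := by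
      intro r hr
      obtain ⟨η, hη, hηprop⟩ := Metric.continuous_iff.mp hccont s2 r hr
      set s := max (s2 - η / 2) (s2 / 2) with hs
      have hss2 : s < s2 := max_lt (by linarith) (by linarith)
      have hs_ge0 : 0 ≤ s := le_trans (by linarith) (le_max_right _ _)
      have hsnotQ : s ∉ Q2 := fun hmem => absurd (csInf_le hQ2bdd hmem) (not_le.mpr hss2)
      have hnsub : ¬(c '' Set.Icc s 1 ⊆ K) := fun h =>
        hsnotQ ⟨⟨hs_ge0, le_trans hss2.le hs2mem.2⟩, h⟩
      rw [Set.not_subset] at hnsub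
      obtain ⟨_, ⟨u, hu, rfl⟩, hcu⟩ := hnsub
      have hus2 : u < s2 := by
        by_contra hle
        exact hcu (hseg2 ⟨u, ⟨not_lt.mp hle, hu.2⟩, rfl⟩)
      refine ⟨u, hus2, le_trans hs_ge0 hu.1, hcu, ?_⟩
      have hd : dist u s2 < η := by
        rw [Real.dist_eq, abs_of_neg (by linarith)]
        have h1 : s2 - η / 2 ≤ s := le_max_left _ _
        have h2 : s ≤ u := hu.1
        linarith
      have := hηprop u hd
      rwa [dist_comm]
    have hw'cl : c s2 ∈ closure Kᶜ := by
      rw [Metric.mem_closure_iff]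
      intro r hr
      obtain ⟨u, _, _, h3, h4⟩ := hnear2 r hr
      exact ⟨c u, h3, h4⟩
    -- the two exit points lie in L
    have hz'K : c s1 ∈ K := hseg1 ⟨s1, ⟨hs1mem.1, le_rfl⟩, rfl⟩
    have hw'K : c s2 ∈ K := hseg2 ⟨s2, ⟨le_rfl, hs2mem.2⟩, rfl⟩
    have hz'L : c s1 ∈ L := hbd ⟨hz'K, hz'cl⟩
    have hw'L : c s2 ∈ L := hbd ⟨hw'K, hw'cl⟩
    obtain ⟨M, hML, hMconn, hz'M, hw'M, hMdiam⟩ :=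
      HL (c s1) hz'L (c s2) hw'L
        (lt_of_le_of_lt (hcdist s1 s2 hs1mem hs2mem) hzwδL)
    refine ⟨c '' Set.Icc 0 s1 ∪ (M ∪ c '' Set.Icc s2 1), ?_, ?_, ?_, ?_, ?_⟩
    · exact Set.union_subset hseg1 (Set.union_subset (hML.trans hLK) hseg2)
    · have hA := hconnimg 0 s1 hs1mem.1
      have hB := hconnimg s2 1 hs2mem.2
      have hMB : IsConnected (M ∪ c '' Set.Icc s2 1) :=
        hMconn.union ⟨c s2, hw'M, ⟨s2, ⟨le_rfl, hs2mem.2⟩, rfl⟩⟩ hB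
      exact hA.union ⟨c s1, ⟨s1, ⟨hs1mem.1, le_rfl⟩, rfl⟩, Or.inl hz'M⟩ hMB
    · exact Or.inl ⟨0, ⟨le_rfl, hs1mem.1⟩, hc0⟩
    · exact Or.inr (Or.inr ⟨1, ⟨hs2mem.2, le_rfl⟩, hc1⟩)
    · have hdA : Metric.diam (c '' Set.Icc 0 s1) ≤ ε / 3 :=
        hdiamimg 0 s1 (Set.Icc_subset_Icc le_rfl hs1mem.2)
      have hdB : Metric.diam (c '' Set.Icc s2 1) ≤ ε / 3 :=
        hdiamimg s2 1 (Set.Icc_subset_Icc hs2mem.1 le_rfl)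
      have h1 : Metric.diam (M ∪ c '' Set.Icc s2 1) ≤
          Metric.diam M + dist (c s2) (c s2) + Metric.diam (c '' Set.Icc s2 1) :=
        Metric.diam_union hw'M ⟨s2, ⟨le_rfl, hs2mem.2⟩, rfl⟩
      have h2 : Metric.diam (c '' Set.Icc 0 s1 ∪ (M ∪ c '' Set.Icc s2 1)) ≤
          Metric.diam (c '' Set.Icc 0 s1) + dist (c s1) (c s1) +
            Metric.diam (M ∪ c '' Set.Icc s2 1) :=
        Metric.diam_union ⟨s1, ⟨hs1mem.1, le_rfl⟩, rfl⟩ (Or.inl hz'M)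
      rw [dist_self] at h1 h2
      linarith

/-- Let `Ω` be a bounded Jordan domain, `γ : [0,T] → closure Ω` continuous avoiding an
interior point `x₀`, and `Ω(t)` the component of `x₀` in `Ω \ γ[0,t]`. Then the closed set
`ℂ \ Ω(t)` is locally connected. -/
theorem complement_locally_connected
    (D : Set ℂ) (hD : IsJordanDomain D) (x₀ : ℂ) (hx₀ : x₀ ∈ D)
    (T : ℝ) (hT : 0 < T) (γ : ℝ → ℂ)
    (hγ : ContinuousOn γ (Set.Icc 0 T))
    (hγD : ∀ s ∈ Set.Icc (0:ℝ) T, γ s ∈ closure D)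
    (havoid : ∀ s ∈ Set.Icc (0:ℝ) T, γ s ≠ x₀)
    (t : ℝ) (ht : t ∈ Set.Ioc 0 T) :
    IsLocallyConnectedSet ((connectedComponentIn (D \ γ '' Set.Icc 0 t) x₀)ᶜ) := by
  obtain ⟨hDopen, hDconn, hDbdd, g, hg, hg01, hginj, hgfr⟩ := hD
  have hγt : ContinuousOn γ (Set.Icc 0 t) := hγ.mono (Set.Icc_subset_Icc le_rfl ht.2)
  set Γ : Set ℂ := γ '' Set.Icc 0 t with hΓ
  have hΓcpt : IsCompact Γ := isCompact_Icc.image_of_continuousOn hγt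
  set U : Set ℂ := D \ Γ with hU
  have hUopen : IsOpen U := hDopen.sdiff hΓcpt.isClosed
  set Ω : Set ℂ := connectedComponentIn U x₀ with hΩ
  set L : Set ℂ := Γ ∪ frontier D with hL
  have hΩU : Ω ⊆ U := connectedComponentIn_subset _ _
  have hLK : L ⊆ Ωᶜ := by
    rintro x (hx | hx) hxΩ
    · exact (hΩU hxΩ).2 hx
    · rw [hDopen.frontier_eq] at hx
      exact hx.2 (hΩU hxΩ).1
  have hbd : Ωᶜ ∩ closure (Ωᶜᶜ) ⊆ L := by
    rw [compl_compl]
    rintro x ⟨hxK, hxcl⟩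
    by_cases hxΓ : x ∈ Γ
    · exact Or.inl hxΓ
    by_cases hxD : x ∈ D
    · exfalso
      have hxU : x ∈ U := ⟨hxD, hxΓ⟩
      obtain ⟨r, hr, hball⟩ := Metric.isOpen_iff.mp hUopen x hxU
      obtain ⟨y, hyΩ, hdxy⟩ := Metric.mem_closure_iff.mp hxcl r hr
      have hyball : y ∈ Metric.ball x r := by rwa [Metric.mem_ball, dist_comm]
      have hsub : Metric.ball x r ⊆ connectedComponentIn U y :=
        (convex_ball x r).isPreconnected.subset_connectedComponentIn hyball hball
      apply hxK
      rw [hΩ, connectedComponentIn_eq hyΩ]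
      exact hsub (Metric.mem_ball_self hr)
    · right
      rw [hDopen.frontier_eq]
      exact ⟨closure_mono (hΩU.trans Set.diff_subset) hxcl, hxD⟩
  have hLlc : IsLocallyConnectedSet L := by
    rw [hL, hΓ, hgfr]
    exact curves_union_llc hγt hg
  exact llc_of_boundary hUopen.connectedComponentIn.isClosed_compl hLK hbd hLlc
end
end

section
/- Suppose (X_n, Y_n) are random variables on a product of Polish spaces converging almost surely to (X, Y), such that the conditional law of Y_n given X_n converges almost surely (weakly) to a fixed deterministic law μ. Then Y is independent of X and Y has law μ. -/
open Filter MeasureTheory ProbabilityTheory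

noncomputable section

lemma isometry_nnreal_toReal' : Isometry NNReal.toReal := fun _ _ => rfl

/-- real version of an `ℝ≥0`-valued bounded continuous function -/
noncomputable def toRealBCF {α : Type*} [TopologicalSpace α]
    (f : BoundedContinuousFunction α NNReal) : BoundedContinuousFunction α ℝ :=
  BoundedContinuousFunction.comp NNReal.toReal isometry_nnreal_toReal'.lipschitz f

@[simp] lemma toRealBCF_apply {α : Type*} [TopologicalSpace α]
    (f : BoundedContinuousFunction α NNReal) (x : α) : toRealBCF f x = (f x : ℝ) := rfl

lemma indicator_coe_eq {α : Type*} (C : Set α) (x : α) :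
    ((C.indicator (fun _ => (1 : NNReal)) x : NNReal) : ℝ)
      = C.indicator (fun _ => (1 : ℝ)) x := by
  by_cases h : x ∈ C <;> simp [h]

/-- Suppose `(Xₙ, Yₙ)` are random variables with values in Polish spaces converging almost
surely to `(X, Y)`, and the conditional law of `Yₙ` given `Xₙ` converges almost surely
(weakly, i.e. tested against bounded continuous functions via conditional expectations) to a
fixed deterministic law `μ`. Then `Y` is independent of `X` and `Y` has law `μ`. -/
theorem indep_of_conditional_law_convergence
    {Ω E F : Type*} [MeasureSpace Ω] [IsProbabilityMeasure (volume : Measure Ω)]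
    [MetricSpace E] [CompleteSpace E] [TopologicalSpace.SeparableSpace E]
    [MeasurableSpace E] [BorelSpace E]
    [MetricSpace F] [CompleteSpace F] [TopologicalSpace.SeparableSpace F]
    [MeasurableSpace F] [BorelSpace F]
    (X : ℕ → Ω → E) (Y : ℕ → Ω → F) (Xl : Ω → E) (Yl : Ω → F)
    (μ : Measure F) [IsProbabilityMeasure μ]
    (hmX : ∀ n, Measurable (X n)) (hmY : ∀ n, Measurable (Y n))
    (hmXl : Measurable Xl) (hmYl : Measurable Yl)
    (hconv : ∀ᵐ ω ∂(volume : Measure Ω),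
      Tendsto (fun n => X n ω) atTop (nhds (Xl ω)) ∧
      Tendsto (fun n => Y n ω) atTop (nhds (Yl ω)))
    (hcond : ∀ f : BoundedContinuousFunction F ℝ,
      ∀ᵐ ω ∂(volume : Measure Ω),
        Tendsto (fun n =>
            (MeasureTheory.condExp (MeasurableSpace.comap (X n) inferInstance)
              volume (fun ω' => f (Y n ω'))) ω)
          atTop (nhds (∫ y, f y ∂μ))) :
    IndepFun Xl Yl volume ∧ Measure.map Yl volume = μ := by
  set P : Measure Ω := volume with hPdef
  -- the key factorization identity
  have key : ∀ (f : BoundedContinuousFunction F ℝ) (g : BoundedContinuousFunction E ℝ),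
      ∫ ω, f (Yl ω) * g (Xl ω) ∂P = (∫ y, f y ∂μ) * ∫ ω, g (Xl ω) ∂P := by
    intro f g
    have h1 : Tendsto (fun n => ∫ ω, f (Y n ω) * g (X n ω) ∂P) atTop
        (nhds (∫ ω, f (Yl ω) * g (Xl ω) ∂P)) := by
      refine tendsto_integral_of_dominated_convergence (fun _ => ‖f‖ * ‖g‖) ?_ ?_ ?_ ?_
      · intro n
        exact ((f.continuous.measurable.comp (hmY n)).mul
          (g.continuous.measurable.comp (hmX n))).aestronglyMeasurable
      · exact integrable_const _
      · intro n
        refine Filter.Eventually.of_forall fun ω => ?_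
        rw [norm_mul]
        exact mul_le_mul (f.norm_coe_le_norm _) (g.norm_coe_le_norm _) (norm_nonneg _)
          (norm_nonneg _)
      · filter_upwards [hconv] with ω hω
        exact ((f.continuous.tendsto _).comp hω.2).mul ((g.continuous.tendsto _).comp hω.1)
    have h2 : ∀ n, ∫ ω, f (Y n ω) * g (X n ω) ∂P
        = ∫ ω, (MeasureTheory.condExp (MeasurableSpace.comap (X n) inferInstance) P
            (fun ω' => f (Y n ω'))) ω * g (X n ω) ∂P := by
      intro n
      set m := MeasurableSpace.comap (X n) inferInstance with hmdef
      have hle := (hmX n).comap_le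
      haveI : SigmaFinite (P.trim hle) := by
        haveI : IsFiniteMeasure (P.trim hle) := by
          constructor
          rw [trim_measurableSet_eq hle MeasurableSet.univ]
          exact measure_lt_top _ _
        infer_instance
      have hXm : Measurable[m] (X n) := Measurable.of_comap_le le_rfl
      have hgm : StronglyMeasurable[m] (fun ω => g (X n ω)) :=
        (g.continuous.measurable.comp hXm).stronglyMeasurable
      have hfY : Integrable (fun ω => f (Y n ω)) P :=
        ⟨(f.continuous.measurable.comp (hmY n)).aestronglyMeasurable,
          HasFiniteIntegral.of_bounded (C := ‖f‖)
            (Filter.Eventually.of_forall fun ω => f.norm_coe_le_norm _)⟩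
      have hprod : Integrable ((fun ω => g (X n ω)) * fun ω => f (Y n ω)) P :=
        ⟨((g.continuous.measurable.comp (hmX n)).mul
            (f.continuous.measurable.comp (hmY n))).aestronglyMeasurable,
          HasFiniteIntegral.of_bounded (C := ‖g‖ * ‖f‖)
            (Filter.Eventually.of_forall fun ω => by
              rw [Pi.mul_apply, norm_mul]
              exact mul_le_mul (g.norm_coe_le_norm _) (f.norm_coe_le_norm _) (norm_nonneg _)
                (norm_nonneg _))⟩
      have hmul := condExp_mul_of_stronglyMeasurable_left (μ := P) hgm hprod hfY
      calc ∫ ω, f (Y n ω) * g (X n ω) ∂P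
          = ∫ ω, ((fun ω => g (X n ω)) * fun ω => f (Y n ω)) ω ∂P := by
            simp [mul_comm]
        _ = ∫ ω, (MeasureTheory.condExp m P ((fun ω => g (X n ω)) * fun ω => f (Y n ω))) ω ∂P :=
            (integral_condExp hle).symm
        _ = ∫ ω, ((fun ω => g (X n ω)) * MeasureTheory.condExp m P (fun ω => f (Y n ω))) ω ∂P :=
            integral_congr_ae hmul
        _ = ∫ ω, (MeasureTheory.condExp m P (fun ω' => f (Y n ω'))) ω * g (X n ω) ∂P := by
            simp [mul_comm]
    have hbdd : ∀ᵐ ω ∂P, ∀ n,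
        |(MeasureTheory.condExp (MeasurableSpace.comap (X n) inferInstance) P
            (fun ω' => f (Y n ω'))) ω| ≤ ‖f‖ := by
      rw [MeasureTheory.ae_all_iff]
      intro n
      have : ∀ᵐ ω ∂P, |f (Y n ω)| ≤ (‖f‖₊ : ℝ) :=
        Filter.Eventually.of_forall fun ω => by
          simpa [Real.norm_eq_abs] using f.norm_coe_le_norm (Y n ω)
      simpa using ae_bdd_condExp_of_ae_bdd this
    have h3 : Tendsto (fun n =>
        ∫ ω, (MeasureTheory.condExp (MeasurableSpace.comap (X n) inferInstance) P
            (fun ω' => f (Y n ω'))) ω * g (X n ω) ∂P) atTop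
        (nhds ((∫ y, f y ∂μ) * ∫ ω, g (Xl ω) ∂P)) := by
      have := tendsto_integral_of_dominated_convergence (μ := P)
        (F := fun n ω => (MeasureTheory.condExp (MeasurableSpace.comap (X n) inferInstance) P
            (fun ω' => f (Y n ω'))) ω * g (X n ω))
        (f := fun ω => (∫ y, f y ∂μ) * g (Xl ω)) (fun _ => ‖f‖ * ‖g‖)
        (fun n => ((stronglyMeasurable_condExp.mono (hmX n).comap_le).aestronglyMeasurable).mul
          (g.continuous.measurable.comp (hmX n)).aestronglyMeasurable)
        (integrable_const _)
        (by
          intro n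
          filter_upwards [hbdd] with ω hω
          rw [norm_mul]
          exact mul_le_mul ((Real.norm_eq_abs _).symm ▸ (Real.norm_eq_abs _) ▸ hω n)
            (g.norm_coe_le_norm _) (norm_nonneg _) (norm_nonneg _))
        (by
          filter_upwards [hcond f, hconv] with ω hω1 hω2
          exact hω1.mul ((g.continuous.tendsto _).comp hω2.1))
      rwa [integral_const_mul] at this
    simp_rw [h2] at h1
    exact tendsto_nhds_unique h1 h3
  -- integrability of bounded continuous compositions
  have hint : ∀ (f : BoundedContinuousFunction F ℝ), Integrable (fun ω => f (Yl ω)) P :=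
    fun f => ⟨(f.continuous.measurable.comp hmYl).aestronglyMeasurable,
      HasFiniteIntegral.of_bounded (C := ‖f‖)
        (Filter.Eventually.of_forall fun ω => f.norm_coe_le_norm _)⟩
  -- identification of the law of Yl
  have heq : ∀ f : BoundedContinuousFunction F ℝ, ∫ ω, f (Yl ω) ∂P = ∫ y, f y ∂μ := by
    intro f
    have := key f 1
    simpa using this
  have hlaw : Measure.map Yl P = μ := by
    haveI : IsProbabilityMeasure (Measure.map Yl P) :=
      Measure.isProbabilityMeasure_map hmYl.aemeasurable
    refine ext_of_forall_lintegral_eq_of_IsFiniteMeasure (fun f => ?_)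
    have conv : ∀ (ν : Measure F) (_ : IsFiniteMeasure ν),
        ∫⁻ x, (f x : ENNReal) ∂ν = ENNReal.ofReal (∫ x, toRealBCF f x ∂ν) := by
      intro ν hν
      rw [ofReal_integral_eq_lintegral_ofReal ((toRealBCF f).integrable ν)
        (Filter.Eventually.of_forall fun x => (f x).coe_nonneg)]
      simp
    rw [conv _ inferInstance, conv _ inferInstance,
      integral_map hmYl.aemeasurable (toRealBCF f).continuous.aestronglyMeasurable, heq]
  -- the closed-set product formula
  have hCD : ∀ (C : Set E) (D : Set F), IsClosed C → IsClosed D →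
      P (Xl ⁻¹' C ∩ Yl ⁻¹' D) = P (Xl ⁻¹' C) * P (Yl ⁻¹' D) := by
    intro C D hC hD
    have hmemC : MeasurableSet (Xl ⁻¹' C) := hmXl hC.measurableSet
    have hmemD : MeasurableSet (Yl ⁻¹' D) := hmYl hD.measurableSet
    set gs : ℕ → BoundedContinuousFunction E ℝ := fun m => toRealBCF (hC.apprSeq m) with hgs
    set fs : ℕ → BoundedContinuousFunction F ℝ := fun k => toRealBCF (hD.apprSeq k) with hfs
    have gs_nonneg : ∀ m x, 0 ≤ gs m x := fun m x => (hC.apprSeq m x).coe_nonneg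
    have gs_le_one : ∀ m x, gs m x ≤ 1 := fun m x => by
      exact_mod_cast HasOuterApproxClosed.apprSeq_apply_le_one hC m x
    have fs_nonneg : ∀ k y, 0 ≤ fs k y := fun k y => (hD.apprSeq k y).coe_nonneg
    have fs_le_one : ∀ k y, fs k y ≤ 1 := fun k y => by
      exact_mod_cast HasOuterApproxClosed.apprSeq_apply_le_one hD k y
    have gs_tendsto : ∀ x, Tendsto (fun m => gs m x) atTop
        (nhds (C.indicator (fun _ => (1:ℝ)) x)) := by
      intro x
      have h := tendsto_pi_nhds.mp (HasOuterApproxClosed.tendsto_apprSeq hC) x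
      have := (NNReal.continuous_coe.tendsto _).comp h
      rwa [Function.comp_def, indicator_coe_eq] at this
    have fs_tendsto : ∀ y, Tendsto (fun k => fs k y) atTop
        (nhds (D.indicator (fun _ => (1:ℝ)) y)) := by
      intro y
      have h := tendsto_pi_nhds.mp (HasOuterApproxClosed.tendsto_apprSeq hD) y
      have := (NNReal.continuous_coe.tendsto _).comp h
      rwa [Function.comp_def, indicator_coe_eq] at this
    -- pointwise identities for indicators
    have indC : ∀ ω, C.indicator (fun _ => (1:ℝ)) (Xl ω)
        = (Xl ⁻¹' C).indicator (fun _ => (1:ℝ)) ω := by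
      intro ω; by_cases h : Xl ω ∈ C <;> simp [h, Set.indicator_apply, Set.mem_preimage]
    have indD : ∀ ω, D.indicator (fun _ => (1:ℝ)) (Yl ω)
        = (Yl ⁻¹' D).indicator (fun _ => (1:ℝ)) ω := by
      intro ω; by_cases h : Yl ω ∈ D <;> simp [h, Set.indicator_apply, Set.mem_preimage]
    -- step 1: m → ∞ with k fixed
    have eq1 : ∀ k, ∫ ω, fs k (Yl ω) * (Xl ⁻¹' C).indicator (fun _ => (1:ℝ)) ω ∂P
        = (∫ y, fs k y ∂μ) * (P (Xl ⁻¹' C)).toReal := by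
      intro k
      have L : Tendsto (fun m => ∫ ω, fs k (Yl ω) * gs m (Xl ω) ∂P) atTop
          (nhds (∫ ω, fs k (Yl ω) * (Xl ⁻¹' C).indicator (fun _ => (1:ℝ)) ω ∂P)) := by
        refine tendsto_integral_of_dominated_convergence (fun _ => 1) ?_ ?_ ?_ ?_
        · intro m
          exact (((fs k).continuous.measurable.comp hmYl).mul
            ((gs m).continuous.measurable.comp hmXl)).aestronglyMeasurable
        · exact integrable_const _
        · intro m
          refine Filter.Eventually.of_forall fun ω => ?_
          rw [norm_mul, Real.norm_eq_abs, Real.norm_eq_abs,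
            abs_of_nonneg (fs_nonneg _ _), abs_of_nonneg (gs_nonneg _ _)]
          exact mul_le_one₀ (fs_le_one _ _) (gs_nonneg _ _) (gs_le_one _ _)
        · refine Filter.Eventually.of_forall fun ω => ?_
          rw [← indC ω]
          exact tendsto_const_nhds.mul (gs_tendsto (Xl ω))
      have R : Tendsto (fun m => (∫ y, fs k y ∂μ) * ∫ ω, gs m (Xl ω) ∂P) atTop
          (nhds ((∫ y, fs k y ∂μ) * (P (Xl ⁻¹' C)).toReal)) := by
        refine Tendsto.const_mul _ ?_
        have L2 : Tendsto (fun m => ∫ ω, gs m (Xl ω) ∂P) atTop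
            (nhds (∫ ω, (Xl ⁻¹' C).indicator (fun _ => (1:ℝ)) ω ∂P)) := by
          refine tendsto_integral_of_dominated_convergence (fun _ => 1) ?_ ?_ ?_ ?_
          · intro m
            exact ((gs m).continuous.measurable.comp hmXl).aestronglyMeasurable
          · exact integrable_const _
          · intro m
            refine Filter.Eventually.of_forall fun ω => ?_
            rw [Real.norm_eq_abs, abs_of_nonneg (gs_nonneg _ _)]
            exact gs_le_one _ _
          · refine Filter.Eventually.of_forall fun ω => ?_
            rw [← indC ω]
            exact gs_tendsto (Xl ω)
        have hI : ∫ ω, (Xl ⁻¹' C).indicator (fun _ => (1:ℝ)) ω ∂P = (P (Xl ⁻¹' C)).toReal := by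
          rw [integral_indicator_const (1:ℝ) hmemC]; simp [Measure.real]
        rwa [hI] at L2
      simp_rw [key (fs k)] at L
      exact tendsto_nhds_unique L R
    -- step 2: k → ∞
    have L3 : Tendsto (fun k => ∫ ω, fs k (Yl ω) * (Xl ⁻¹' C).indicator (fun _ => (1:ℝ)) ω ∂P)
        atTop (nhds (∫ ω, (Yl ⁻¹' D).indicator (fun _ => (1:ℝ)) ω
          * (Xl ⁻¹' C).indicator (fun _ => (1:ℝ)) ω ∂P)) := by
      refine tendsto_integral_of_dominated_convergence (fun _ => 1) ?_ ?_ ?_ ?_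
      · intro k
        exact (((fs k).continuous.measurable.comp hmYl).mul
          ((measurable_const.indicator hmemC))).aestronglyMeasurable
      · exact integrable_const _
      · intro k
        refine Filter.Eventually.of_forall fun ω => ?_
        rw [norm_mul, Real.norm_eq_abs, Real.norm_eq_abs, abs_of_nonneg (fs_nonneg _ _)]
        have h2 : |(Xl ⁻¹' C).indicator (fun _ => (1:ℝ)) ω| ≤ 1 := by
          by_cases h : ω ∈ Xl ⁻¹' C <;> simp [h]
        calc fs k (Yl ω) * |(Xl ⁻¹' C).indicator (fun _ => (1:ℝ)) ω|
            ≤ 1 * 1 := mul_le_mul (fs_le_one _ _) h2 (abs_nonneg _) zero_le_one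
          _ = 1 := one_mul 1
      · refine Filter.Eventually.of_forall fun ω => ?_
        rw [← indD ω]
        exact (fs_tendsto (Yl ω)).mul tendsto_const_nhds
    have R3 : Tendsto (fun k => (∫ y, fs k y ∂μ) * (P (Xl ⁻¹' C)).toReal) atTop
        (nhds ((μ D).toReal * (P (Xl ⁻¹' C)).toReal)) := by
      refine Tendsto.mul_const _ ?_
      have L4 : Tendsto (fun k => ∫ y, fs k y ∂μ) atTop
          (nhds (∫ y, D.indicator (fun _ => (1:ℝ)) y ∂μ)) := by
        refine tendsto_integral_of_dominated_convergence (fun _ => 1) ?_ ?_ ?_ ?_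
        · intro k
          exact (fs k).continuous.measurable.aestronglyMeasurable
        · exact integrable_const _
        · intro k
          refine Filter.Eventually.of_forall fun y => ?_
          rw [Real.norm_eq_abs, abs_of_nonneg (fs_nonneg _ _)]
          exact fs_le_one _ _
        · exact Filter.Eventually.of_forall fun y => fs_tendsto y
      have hI : ∫ y, D.indicator (fun _ => (1:ℝ)) y ∂μ = (μ D).toReal := by
        rw [integral_indicator_const (1:ℝ) hD.measurableSet]; simp [Measure.real]
      rwa [hI] at L4
    simp_rw [eq1] at L3
    have final := tendsto_nhds_unique L3 R3
    -- identify the limit integral with the measure of the intersection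
    have union_eq : ∫ ω, (Yl ⁻¹' D).indicator (fun _ => (1:ℝ)) ω
        * (Xl ⁻¹' C).indicator (fun _ => (1:ℝ)) ω ∂P
        = (P (Xl ⁻¹' C ∩ Yl ⁻¹' D)).toReal := by
      have : ∀ ω, (Yl ⁻¹' D).indicator (fun _ => (1:ℝ)) ω
          * (Xl ⁻¹' C).indicator (fun _ => (1:ℝ)) ω
          = (Xl ⁻¹' C ∩ Yl ⁻¹' D).indicator (fun _ => (1:ℝ)) ω := by
        intro ω
        by_cases h1 : ω ∈ Yl ⁻¹' D <;> by_cases h2 : ω ∈ Xl ⁻¹' C <;>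
          simp [Set.indicator_apply, h1, h2, Set.mem_inter_iff]
      simp_rw [this]
      rw [integral_indicator_const (1:ℝ) (hmemC.inter hmemD)]; simp [Measure.real]
    rw [union_eq] at final
    have hYD : P (Yl ⁻¹' D) = μ D := by
      rw [← hlaw, Measure.map_apply hmYl hD.measurableSet]
    rw [hYD]
    have h1 : P (Xl ⁻¹' C ∩ Yl ⁻¹' D) ≠ ⊤ := measure_ne_top _ _
    have h2 : P (Xl ⁻¹' C) * μ D ≠ ⊤ :=
      ENNReal.mul_ne_top (measure_ne_top _ _) (measure_ne_top _ _)
    rw [← ENNReal.toReal_eq_toReal_iff' h1 h2, final, ENNReal.toReal_mul, mul_comm]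
  -- conclude independence
  refine ⟨?_, hlaw⟩
  rw [IndepFun_iff_Indep]
  have hgen1 : MeasurableSpace.comap Xl (inferInstance : MeasurableSpace E)
      = MeasurableSpace.generateFrom (Set.preimage Xl '' {s : Set E | IsClosed s}) := by
    conv_lhs => rw [BorelSpace.measurable_eq (α := E), borel_eq_generateFrom_isClosed]
    rw [MeasurableSpace.comap_generateFrom]
  have hgen2 : MeasurableSpace.comap Yl (inferInstance : MeasurableSpace F)
      = MeasurableSpace.generateFrom (Set.preimage Yl '' {s : Set F | IsClosed s}) := by
    conv_lhs => rw [BorelSpace.measurable_eq (α := F), borel_eq_generateFrom_isClosed]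
    rw [MeasurableSpace.comap_generateFrom]
  refine IndepSets.indep hmXl.comap_le hmYl.comap_le ?_ ?_ hgen1 hgen2 ?_
  · rintro t1 ⟨C1, hC1, rfl⟩ t2 ⟨C2, hC2, rfl⟩ -
    exact ⟨C1 ∩ C2, hC1.inter hC2, by rw [Set.preimage_inter]⟩
  · rintro t1 ⟨D1, hD1, rfl⟩ t2 ⟨D2, hD2, rfl⟩ -
    exact ⟨D1 ∩ D2, hD1.inter hD2, by rw [Set.preimage_inter]⟩
  · rw [IndepSets_iff]
    rintro t1 t2 ⟨C, hC, rfl⟩ ⟨D, hD, rfl⟩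
    exact hCD C D hC hD

end
end
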